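/- Let μ be a Borel measure on ℝ with ∫ (1+λ²)⁻¹ dμ = 1, let κ ∈ ℂ with |κ| < 1, and let z₀ ∈ ℂ with Im z₀ > 0. Define M(w) = ∫ (1/(λ-w) - λ/(1+λ²)) dμ(λ) for Im w > 0. Then ∫ (1/(λ-z₀))·((i-z₀)/(λ-i) + κ·(i+z₀)/(λ+i)) dμ(λ) = -M(z₀) + i + κ·(M(z₀) + i). In particular, this integral vanishes if and only if κ = (M(z₀) - i)/(M(z₀) + i). -/

import Mathlib

open MeasureTheory Complex

lemma ec_sub_ne (x : ℝ) (z : ℂ) (hz : z.im ≠ 0) : (x : ℂ) - z ≠ 0 := by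
  intro h
  have h2 : ((x : ℂ) - z).im = 0 := by rw [h]; simp
  simp [Complex.sub_im] at h2
  exact hz h2

lemma ec_norm_sub_I (x : ℝ) (c : ℂ) (h1 : c.re = 0) (h2 : c.im ^ 2 = 1) :
    ‖(x : ℂ) - c‖ = Real.sqrt (1 + x ^ 2) := by
  rw [Complex.norm_def]
  congr 1
  simp [Complex.normSq_apply, h1]
  nlinarith [h2]

lemma ec_lower (x : ℝ) (z₀ : ℂ) (hz₀ : 0 < z₀.im) :
    Real.sqrt (1 + x ^ 2) ≤ (1 + (1 + ‖z₀‖) / z₀.im) * ‖(x : ℂ) - z₀‖ := by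
  have hb : z₀.im ≤ ‖(x : ℂ) - z₀‖ := by
    have := Complex.abs_im_le_norm ((x : ℂ) - z₀)
    simp only [Complex.sub_im, Complex.ofReal_im, zero_sub, abs_neg] at this
    calc z₀.im ≤ |z₀.im| := le_abs_self _
    _ ≤ _ := this
  have hx : |x| ≤ ‖(x : ℂ) - z₀‖ + ‖z₀‖ := by
    calc |x| = ‖(x : ℂ)‖ := by simp
    _ = ‖((x : ℂ) - z₀) + z₀‖ := by ring_nf
    _ ≤ _ := norm_add_le _ _
  have hs : Real.sqrt (1 + x ^ 2) ≤ 1 + |x| := by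
    rw [show (1 : ℝ) + |x| = Real.sqrt ((1 + |x|) ^ 2) from
      (Real.sqrt_sq (by positivity)).symm]
    apply Real.sqrt_le_sqrt
    nlinarith [abs_nonneg x, _root_.sq_abs x]
  have hz : (1 + ‖z₀‖) ≤ ((1 + ‖z₀‖) / z₀.im) * ‖(x : ℂ) - z₀‖ := by
    rw [div_mul_eq_mul_div, le_div_iff₀ hz₀]
    have : (0 : ℝ) ≤ 1 + ‖z₀‖ := by positivity
    nlinarith
  calc Real.sqrt (1 + x ^ 2) ≤ 1 + |x| := hs
  _ ≤ 1 + ‖z₀‖ + ‖(x : ℂ) - z₀‖ := by linarith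
  _ ≤ ((1 + ‖z₀‖) / z₀.im) * ‖(x : ℂ) - z₀‖ + ‖(x : ℂ) - z₀‖ := by linarith
  _ = _ := by ring

lemma ec_integrable (μ : Measure ℝ)
    (h1 : Integrable (fun x : ℝ => (1 + x ^ 2)⁻¹) μ)
    (z₀ c w : ℂ) (hz₀ : 0 < z₀.im) (hcim : c.im ≠ 0)
    (hc : ∀ x : ℝ, ‖(x : ℂ) - c‖ = Real.sqrt (1 + x ^ 2)) :
    Integrable (fun x : ℝ => w / (((x : ℂ) - z₀) * ((x : ℂ) - c))) μ := by
  set C : ℝ := 1 + (1 + ‖z₀‖) / z₀.im with hCdef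
  have hC : 0 < C := by positivity
  apply Integrable.mono' (g := fun x => ‖w‖ * C * (1 + x ^ 2)⁻¹)
    ((h1.const_mul (‖w‖ * C)).congr (by filter_upwards with x; ring))
  · apply Continuous.aestronglyMeasurable
    apply continuous_const.div
    · exact ((Complex.continuous_ofReal.sub continuous_const).mul
        (Complex.continuous_ofReal.sub continuous_const))
    · intro x
      exact mul_ne_zero (ec_sub_ne x z₀ hz₀.ne') (ec_sub_ne x c hcim)
  · filter_upwards with x
    have hzne : (0 : ℝ) < ‖(x : ℂ) - z₀‖ :=
      norm_pos_iff.mpr (ec_sub_ne x z₀ hz₀.ne')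
    have hsq : (0 : ℝ) < Real.sqrt (1 + x ^ 2) := by positivity
    have hmul : Real.sqrt (1 + x ^ 2) * Real.sqrt (1 + x ^ 2) = 1 + x ^ 2 :=
      Real.mul_self_sqrt (by positivity)
    have hlow := ec_lower x z₀ hz₀
    have hpos : (0 : ℝ) < 1 + x ^ 2 := by positivity
    rw [norm_div, norm_mul, hc x, div_le_iff₀ (by positivity)]
    rw [← hCdef] at hlow
    have key : (1 + x ^ 2) ≤ C * (‖(x : ℂ) - z₀‖ * Real.sqrt (1 + x ^ 2)) := by
      nlinarith [mul_le_mul_of_nonneg_right hlow hsq.le]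
    have key2 := mul_le_mul_of_nonneg_left key (norm_nonneg w)
    calc ‖w‖ = ‖w‖ * (1 + x ^ 2) * (1 + x ^ 2)⁻¹ := by field_simp
    _ ≤ ‖w‖ * (C * (‖(x : ℂ) - z₀‖ * Real.sqrt (1 + x ^ 2))) * (1 + x ^ 2)⁻¹ :=
        mul_le_mul_of_nonneg_right key2 (by positivity)
    _ = ‖w‖ * C * (1 + x ^ 2)⁻¹ * (‖(x : ℂ) - z₀‖ * Real.sqrt (1 + x ^ 2)) := by ring

theorem eigenvalue_criterion_integral
    (μ : Measure ℝ)
    (hnorm : ∫ x, (1 + x ^ 2)⁻¹ ∂μ = 1)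
    (κ : ℂ) (hκ : ‖κ‖ < 1)
    (z₀ : ℂ) (hz₀ : 0 < z₀.im)
    (M : ℂ)
    (hM : M = ∫ x, (((x : ℂ) - z₀)⁻¹ - (x : ℂ) / (1 + (x : ℂ) ^ 2)) ∂μ)
    (hMi : M + I ≠ 0) :
    (∫ x, (((x : ℂ) - z₀)⁻¹ *
        ((I - z₀) / ((x : ℂ) - I) + κ * (I + z₀) / ((x : ℂ) + I))) ∂μ) =
      -M + I + κ * (M + I) ∧
    ((∫ x, (((x : ℂ) - z₀)⁻¹ *
        ((I - z₀) / ((x : ℂ) - I) + κ * (I + z₀) / ((x : ℂ) + I))) ∂μ) = 0 ↔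
      κ = (M - I) / (M + I)) := by
  have h1r : Integrable (fun x : ℝ => (1 + x ^ 2)⁻¹) μ := by
    by_contra h
    rw [integral_undef h] at hnorm
    exact one_ne_zero hnorm.symm
  have h1c : Integrable (fun x : ℝ => ((1 : ℂ) + (x : ℂ) ^ 2)⁻¹) μ := by
    apply h1r.ofReal.congr
    filter_upwards with x
    norm_num
  have hx1 : ∀ x : ℝ, (x : ℂ) - z₀ ≠ 0 := fun x => ec_sub_ne x z₀ hz₀.ne'
  have hx2 : ∀ x : ℝ, (x : ℂ) - I ≠ 0 := fun x => ec_sub_ne x I (by simp)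
  have hx3 : ∀ x : ℝ, (x : ℂ) + I ≠ 0 := by
    intro x
    have := ec_sub_ne x (-I) (by simp)
    simpa [sub_neg_eq_add] using this
  have hx4 : ∀ x : ℝ, (1 : ℂ) + (x : ℂ) ^ 2 ≠ 0 := by
    intro x
    have : ((1 + x ^ 2 : ℝ) : ℂ) ≠ 0 := by
      rw [Complex.ofReal_ne_zero]; positivity
    simpa using this
  set A : ℝ → ℂ := fun x => (I - z₀) / (((x : ℂ) - z₀) * ((x : ℂ) - I)) with hA
  set B : ℝ → ℂ := fun x => (I + z₀) / (((x : ℂ) - z₀) * ((x : ℂ) + I)) with hB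
  set fz : ℝ → ℂ := fun x => ((x : ℂ) - z₀)⁻¹ - (x : ℂ) / (1 + (x : ℂ) ^ 2) with hfz
  have intA : Integrable A μ :=
    ec_integrable μ h1r z₀ I (I - z₀) hz₀ (by simp)
      (fun x => ec_norm_sub_I x I (by simp) (by simp))
  have intB : Integrable B μ := by
    have := ec_integrable μ h1r z₀ (-I) (I + z₀) hz₀ (by simp)
      (fun x => ec_norm_sub_I x (-I) (by simp) (by simp))
    simpa [hB, sub_neg_eq_add] using this
  have e1 : ∀ x : ℝ, A x = I * ((1 : ℂ) + (x : ℂ) ^ 2)⁻¹ - fz x := by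
    intro x
    have a1 := hx1 x; have a2 := hx2 x; have a4 := hx4 x
    rw [hA, hfz]
    simp only
    field_simp
    ring_nf
    simp only [Complex.I_sq]
    ring
  have e3 : ∀ x : ℝ, B x = fz x - (-I) * ((1 : ℂ) + (x : ℂ) ^ 2)⁻¹ := by
    intro x
    have a1 := hx1 x; have a3 := hx3 x; have a4 := hx4 x
    rw [hB, hfz]
    simp only
    field_simp
    ring_nf
    simp only [Complex.I_sq]
    ring
  have e2 : ∀ x : ℝ, ((x : ℂ) - z₀)⁻¹ *
      ((I - z₀) / ((x : ℂ) - I) + κ * (I + z₀) / ((x : ℂ) + I)) = A x + κ * B x := by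
    intro x
    have a1 := hx1 x; have a2 := hx2 x; have a3 := hx3 x
    rw [hA, hB]
    simp only
    field_simp
  have int_fz : Integrable fz μ := by
    apply ((h1c.const_mul I).sub intA).congr
    filter_upwards with x
    simp only [Pi.sub_apply]
    rw [e1 x]
    ring
  have hI1 : (∫ x : ℝ, ((1 : ℂ) + (x : ℂ) ^ 2)⁻¹ ∂μ) = 1 := by
    have heq : (fun x : ℝ => ((1 : ℂ) + (x : ℂ) ^ 2)⁻¹) =
        fun x : ℝ => (((1 + x ^ 2)⁻¹ : ℝ) : ℂ) := by
      funext x; norm_num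
    have h2 : (∫ x : ℝ, (((1 + x ^ 2)⁻¹ : ℝ) : ℂ) ∂μ) =
        ((∫ x, (1 + x ^ 2)⁻¹ ∂μ : ℝ) : ℂ) := integral_ofReal
    rw [heq, h2, hnorm]
    simp
  have hIA : (∫ x, A x ∂μ) = I - M := by
    have h0 : (∫ x, A x ∂μ) =
        ∫ x, (I * ((1 : ℂ) + (x : ℂ) ^ 2)⁻¹ - fz x) ∂μ := by
      apply integral_congr_ae
      filter_upwards with x using e1 x
    rw [h0, integral_sub (h1c.const_mul I) int_fz, integral_const_mul, hI1, hM, hfz]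
    ring
  have hIB : (∫ x, B x ∂μ) = M + I := by
    have h0 : (∫ x, B x ∂μ) =
        ∫ x, (fz x - (-I) * ((1 : ℂ) + (x : ℂ) ^ 2)⁻¹) ∂μ := by
      apply integral_congr_ae
      filter_upwards with x using e3 x
    rw [h0, integral_sub int_fz (h1c.const_mul (-I)), integral_const_mul, hI1, hM, hfz]
    ring
  have main : (∫ x, (((x : ℂ) - z₀)⁻¹ *
      ((I - z₀) / ((x : ℂ) - I) + κ * (I + z₀) / ((x : ℂ) + I))) ∂μ) =
      -M + I + κ * (M + I) := by
    have h0 : (∫ x, (((x : ℂ) - z₀)⁻¹ *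
        ((I - z₀) / ((x : ℂ) - I) + κ * (I + z₀) / ((x : ℂ) + I))) ∂μ) =
        ∫ x, (A x + κ * B x) ∂μ := by
      apply integral_congr_ae
      filter_upwards with x using e2 x
    rw [h0, integral_add intA (intB.const_mul κ), integral_const_mul, hIA, hIB]
    ring
  refine ⟨main, ?_⟩
  rw [main]
  constructor
  · intro h
    rw [eq_div_iff hMi]
    linear_combination h
  · intro h
    rw [h]
    field_simp
    ring
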